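/- For any finite word w = w_1...w_n, the G-defect D_G(w) equals the number of G-lacunas in w, i.e., the number of indices i ∈ {1,...,n} such that both the last letter w_i and the G-longest palindromic suffix of w_1...w_i fail to be G-unioccurrent in w_1...w_i. -/

import Mathlib

def IsMorphism {A : Type*} (f : List A → List A) : Prop :=
  ∀ v w : List A, f (v ++ w) = f v ++ f w

def IsAntimorphism {A : Type*} (f : List A → List A) : Prop :=
  ∀ v w : List A, f (v ++ w) = f w ++ f v

structure AMGroup (A : Type*) where
  carrier : Set (List A → List A)
  finite : carrier.Finite
  id_mem : id ∈ carrier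
  comp_mem : ∀ f ∈ carrier, ∀ g ∈ carrier, f ∘ g ∈ carrier
  inv_mem : ∀ f ∈ carrier, ∃ g ∈ carrier, f ∘ g = id ∧ g ∘ f = id
  morph_or_anti : ∀ f ∈ carrier, IsMorphism f ∨ IsAntimorphism f

/-- `v` is a `G`-palindrome: fixed by some antimorphism of `G`. -/
def GPal {A : Type*} (G : AMGroup A) (v : List A) : Prop :=
  ∃ Θ ∈ G.carrier, IsAntimorphism Θ ∧ Θ v = v

/-- The `G`-orbit (equivalence class) `[v]` of a word `v`. -/
def orbitG {A : Type*} (G : AMGroup A) (v : List A) : Set (List A) :=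
  {x : List A | ∃ μ ∈ G.carrier, x = μ v}

/-- `Pal_G(w)`: the set of `G`-classes of `G`-palindromic factors of `w`
(including the empty word). -/
def PalG {A : Type*} (G : AMGroup A) (w : List A) : Set (Set (List A)) :=
  {S | ∃ v : List A, v <:+: w ∧ GPal G v ∧ S = orbitG G v}

/-- `γ_G(w)`: the number of classes `[a]` of letters occurring in `w` that are
fixed by no antimorphism of `G`. -/
noncomputable def gammaG {A : Type*} (G : AMGroup A) (w : List A) : ℕ :=
  {S : Set (List A) | ∃ a : A, a ∈ w ∧
    (∀ Θ ∈ G.carrier, IsAntimorphism Θ → Θ [a] ≠ [a]) ∧ S = orbitG G [a]}.ncard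

/-- The `G`-defect of a finite word. -/
noncomputable def DG {A : Type*} (G : AMGroup A) (w : List A) : ℕ :=
  w.length + 1 - (PalG G w).ncard - gammaG G w

/-- `i` is a `G`-occurrence of `v` in `w` (an occurrence of some element of
`[v]` starting at position `i`). -/
def GOcc {A : Type*} (G : AMGroup A) (v w : List A) (i : ℕ) : Prop :=
  ∃ μ ∈ G.carrier, ∃ p s : List A, w = p ++ μ v ++ s ∧ p.length = i

/-- `v` is `G`-unioccurrent in `w`: `v` occurs in `w` and `w` has exactly one
`G`-occurrence of `v`. -/
def GUnioccurrent {A : Type*} (G : AMGroup A) (v w : List A) : Prop :=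
  v <:+: w ∧ ∃! i : ℕ, GOcc G v w i

/-- `s` is the `G`-longest palindromic suffix of `p`. -/
def IsGlps {A : Type*} (G : AMGroup A) (p s : List A) : Prop :=
  s <:+ p ∧ GPal G s ∧ ∀ t : List A, t <:+ p → GPal G t → t.length ≤ s.length

namespace DefectProof

variable {A : Type*} (G : AMGroup A)

/-- the γ-set -/
def gammaSet (w : List A) : Set (Set (List A)) :=
  {S : Set (List A) | ∃ a : A, a ∈ w ∧
    (∀ Θ ∈ G.carrier, IsAntimorphism Θ → Θ [a] ≠ [a]) ∧ S = orbitG G [a]}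

lemma gammaG_eq (w : List A) : gammaG G w = (gammaSet G w).ncard := rfl

/-- the lacuna set -/
def lacunaSet (w : List A) : Set ℕ :=
  {i : ℕ | ∃ h : i < w.length,
    ¬ GUnioccurrent G [w.get ⟨i, h⟩] (w.take (i + 1)) ∧
    ∀ s : List A, IsGlps G (w.take (i + 1)) s →
      ¬ GUnioccurrent G s (w.take (i + 1))}

variable {G}

lemma map_nil {f : List A → List A} (hf : f ∈ G.carrier) : f [] = [] := by
  rcases G.morph_or_anti f hf with h | h <;>
  · have h2 := h [] []
    simp only [List.append_nil] at h2
    have := congrArg List.length h2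
    simp only [List.length_append] at this
    exact List.eq_nil_of_length_eq_zero (by omega)

lemma map_single_ne_nil {f : List A → List A} (hf : f ∈ G.carrier) (a : A) : f [a] ≠ [] := by
  obtain ⟨g, hg, hfg, hgf⟩ := G.inv_mem f hf
  intro h
  have : g (f [a]) = [a] := congrFun hgf [a]
  rw [h, map_nil hg] at this
  exact List.cons_ne_nil a [] this.symm

lemma length_le_map {f : List A → List A} (hf : f ∈ G.carrier) (l : List A) :
    l.length ≤ (f l).length := by
  induction l with
  | nil => simp
  | cons c t ih =>
    have h1 : f (c :: t) = f ([c] ++ t) := by simp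
    have hne : f [c] ≠ [] := map_single_ne_nil hf c
    have hpos : 1 ≤ (f [c]).length := by
      cases h : f [c] with
      | nil => exact absurd h hne
      | cons _ _ => simp
    rcases G.morph_or_anti f hf with h | h <;>
    · rw [h1, h [c] t]
      simp only [List.length_append, List.length_cons]
      omega

lemma length_map {f : List A → List A} (hf : f ∈ G.carrier) (l : List A) :
    (f l).length = l.length := by
  obtain ⟨g, hg, hfg, hgf⟩ := G.inv_mem f hf
  have h1 : g (f l) = l := congrFun hgf l
  have h2 := length_le_map hg (f l)
  rw [h1] at h2
  exact le_antisymm h2 (length_le_map hf l)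

lemma map_single {f : List A → List A} (hf : f ∈ G.carrier) (a : A) :
    ∃ b : A, f [a] = [b] := by
  have := length_map hf [a]
  simp only [List.length_singleton] at this
  exact List.length_eq_one_iff.mp this

lemma mem_orbit_self (v : List A) : v ∈ orbitG G v := ⟨id, G.id_mem, rfl⟩

lemma orbit_eq_of_mem {u v : List A} (h : u ∈ orbitG G v) : orbitG G u = orbitG G v := by
  obtain ⟨μ, hμ, rfl⟩ := h
  obtain ⟨g, hg, hfg, hgf⟩ := G.inv_mem μ hμ
  ext y
  constructor
  · rintro ⟨ν, hν, rfl⟩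
    exact ⟨ν ∘ μ, G.comp_mem ν hν μ hμ, rfl⟩
  · rintro ⟨ν, hν, rfl⟩
    refine ⟨ν ∘ g, G.comp_mem ν hν g hg, ?_⟩
    show ν v = ν (g (μ v))
    rw [show g (μ v) = v from congrFun hgf v]

lemma conj_anti {μ g Θ : List A → List A} (hμ : μ ∈ G.carrier) (hg : g ∈ G.carrier)
    (hΘ : Θ ∈ G.carrier) (hΘa : IsAntimorphism Θ)
    (h1 : μ ∘ g = id) (h2 : g ∘ μ = id) :
    IsAntimorphism (μ ∘ Θ ∘ g) ∨ ∀ a b : A, a = b := by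
  rcases G.morph_or_anti μ hμ with hμm | hμa <;> rcases G.morph_or_anti g hg with hgm | hga
  · left
    intro v w
    show μ (Θ (g (v ++ w))) = μ (Θ (g w)) ++ μ (Θ (g v))
    rw [hgm, hΘa, hμm]
  · right
    intro a b
    have : (μ ∘ g) ([a] ++ [b]) = [a] ++ [b] := by rw [h1]; rfl
    have h3 : μ (g ([a] ++ [b])) = [a] ++ [b] := this
    rw [hga, hμm] at h3
    have ha : μ (g [a]) = [a] := congrFun h1 [a]
    have hb : μ (g [b]) = [b] := congrFun h1 [b]
    rw [ha, hb] at h3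
    exact (by simpa using h3.symm : a = b ∧ b = a).1
  · right
    intro a b
    have h3 : g (μ ([a] ++ [b])) = [a] ++ [b] := congrFun h2 ([a] ++ [b])
    rw [hμa, hgm] at h3
    have ha : g (μ [a]) = [a] := congrFun h2 [a]
    have hb : g (μ [b]) = [b] := congrFun h2 [b]
    rw [ha, hb] at h3
    exact (by simpa using h3.symm : a = b ∧ b = a).1
  · left
    intro v w
    show μ (Θ (g (v ++ w))) = μ (Θ (g w)) ++ μ (Θ (g v))
    rw [hga, hΘa, hμa]

lemma eq_of_subsingleton (hs : ∀ a b : A, a = b) {u t : List A} (h : u.length = t.length) :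
    u = t := by
  apply List.ext_getElem h
  intro i h1 h2
  exact hs _ _

lemma gpal_orbit {v u : List A} (hv : GPal G v) (hu : u ∈ orbitG G v) : GPal G u := by
  obtain ⟨Θ, hΘ, hΘa, hΘv⟩ := hv
  obtain ⟨μ, hμ, rfl⟩ := hu
  obtain ⟨g, hg, hfg, hgf⟩ := G.inv_mem μ hμ
  rcases conj_anti hμ hg hΘ hΘa hfg hgf with h | h
  · refine ⟨μ ∘ Θ ∘ g, ?_, h, ?_⟩
    · exact G.comp_mem μ hμ _ (G.comp_mem Θ hΘ g hg)
    · show μ (Θ (g (μ v))) = μ v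
      rw [show g (μ v) = v from congrFun hgf v, hΘv]
  · refine ⟨Θ, hΘ, hΘa, ?_⟩
    exact eq_of_subsingleton h (length_map hΘ (μ v))

lemma gpal_nil (hanti : ∃ Θ ∈ G.carrier, IsAntimorphism Θ) : GPal G ([] : List A) := by
  obtain ⟨Θ, hΘ, hΘa⟩ := hanti
  exact ⟨Θ, hΘ, hΘa, map_nil hΘ⟩

lemma mem_map_of_mem {f : List A → List A} (hf : f ∈ G.carrier) {b : A} {v : List A}
    (hb : b ∈ v) : ∃ c : A, c ∈ f v ∧ [c] ∈ orbitG G ([b] : List A) := by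
  obtain ⟨p, s, rfl⟩ := List.append_of_mem hb
  obtain ⟨c, hc⟩ := map_single hf b
  refine ⟨c, ?_, ⟨f, hf, hc.symm⟩⟩
  have h1 : p ++ b :: s = p ++ [b] ++ s := by simp
  rcases G.morph_or_anti f hf with h | h <;>
  · rw [h1, h, h] at *
    simp [hc]

lemma infix_of_eq_concat {w q v r : List A} {x : A} (h : w ++ [x] = q ++ v ++ r)
    (hr : r ≠ []) : v <:+: w := by
  rcases List.eq_nil_or_concat r with rfl | ⟨r', y, rfl⟩
  · exact absurd rfl hr
  · have h2 : w ++ [x] = (q ++ v ++ r') ++ [y] := by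
      rw [h]; simp
    have := (List.append_inj' h2 rfl).1
    exact ⟨q, r', this.symm⟩

lemma infix_concat {v w : List A} {x : A} (h : v <:+: (w ++ [x])) :
    v <:+ (w ++ [x]) ∨ v <:+: w := by
  obtain ⟨q, r, hqr⟩ := h
  rcases List.eq_nil_or_concat r with rfl | ⟨r', y, rfl⟩
  · left; exact ⟨q, by simpa using hqr⟩
  · right; exact infix_of_eq_concat hqr.symm (by simp)

lemma suffix_of_suffix_le {s t p : List A} (hs : s <:+ p) (ht : t <:+ p)
    (h : s.length ≤ t.length) : s <:+ t := by
  obtain ⟨u, rfl⟩ := hs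
  obtain ⟨u', hu'⟩ := ht
  have hl : u'.length ≤ u.length := by
    have := congrArg List.length hu'
    simp only [List.length_append] at this
    omega
  have hpre : u' <+: u :=
    List.prefix_of_prefix_length_le ⟨t, hu'⟩ (List.prefix_append u s) hl
  obtain ⟨d, rfl⟩ := hpre
  have : u' ++ d ++ s = u' ++ t := by rw [hu']
  rw [List.append_assoc] at this
  have := List.append_cancel_left this
  exact ⟨d, this⟩

lemma suffix_eq_of_length {s t p : List A} (hs : s <:+ p) (ht : t <:+ p)
    (h : s.length = t.length) : s = t := by
  have h1 := suffix_of_suffix_le hs ht h.le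
  exact List.IsSuffix.eq_of_length h1 h


lemma gocc_suffix {v w : List A} (hv : v <:+ w) : GOcc G v w (w.length - v.length) := by
  obtain ⟨p, rfl⟩ := hv
  exact ⟨id, G.id_mem, p, [], by simp, by simp⟩

lemma guniocc_iff {v w : List A} {x : A} (hv : v <:+ (w ++ [x])) (hne : v ≠ []) :
    GUnioccurrent G v (w ++ [x]) ↔ ∀ u ∈ orbitG G v, ¬ u <:+: w := by
  have hvpos : 1 ≤ v.length := by
    cases v with
    | nil => exact absurd rfl hne
    | cons _ _ => simp
  constructor
  · rintro ⟨hinf, i, hi, huni⟩ u hu ⟨p, s, heq⟩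
    obtain ⟨μ, hμ, rfl⟩ := hu
    have h1 : GOcc G v (w ++ [x]) p.length :=
      ⟨μ, hμ, p, s ++ [x], by rw [← heq]; simp, rfl⟩
    have h2 := huni _ h1
    have h3 := huni _ (gocc_suffix hv)
    have hlen := congrArg List.length heq
    have hμlen := length_map hμ v
    have hvle := hv.length_le
    simp only [List.length_append, List.length_singleton] at hlen hvle h3
    omega
  · intro h
    refine ⟨hv.isInfix, (w ++ [x]).length - v.length, gocc_suffix hv, ?_⟩
    rintro j ⟨μ, hμ, p, s, heq, rfl⟩
    rcases List.eq_nil_or_concat s with rfl | ⟨s', y, rfl⟩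
    · have hlen := congrArg List.length heq
      have hμlen := length_map hμ v
      simp only [List.length_append, List.length_singleton, List.append_nil,
        List.length_nil] at hlen ⊢
      rw [hμlen] at hlen
      omega
    · exfalso
      have h2 : w ++ [x] = p ++ μ v ++ (s' ++ [y]) := by rw [heq]; simp
      exact h (μ v) ⟨μ, hμ, rfl⟩ (infix_of_eq_concat h2 (by simp))

lemma not_guniocc_nil {w : List A} {x : A} :
    ¬ GUnioccurrent G ([] : List A) (w ++ [x]) := by
  rintro ⟨-, i, hi, huni⟩
  have h0 : GOcc G ([] : List A) (w ++ [x]) 0 :=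
    ⟨id, G.id_mem, [], w ++ [x], by simp, rfl⟩
  have h1 : GOcc G ([] : List A) (w ++ [x]) (w ++ [x]).length :=
    ⟨id, G.id_mem, w ++ [x], [], by simp, rfl⟩
  have e0 : 0 = i := huni 0 h0
  have e1 : (w ++ [x]).length = i := huni _ h1
  simp only [List.length_append, List.length_singleton] at e1
  omega

lemma mem_palG_iff {w v : List A} (hp : GPal G v) :
    orbitG G v ∈ PalG G w ↔ ∃ u ∈ orbitG G v, u <:+: w := by
  constructor
  · rintro ⟨v', hinf, hpal', heq⟩
    exact ⟨v', by rw [heq]; exact mem_orbit_self v', hinf⟩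
  · rintro ⟨u, hu, hinf⟩
    exact ⟨u, hinf, gpal_orbit hp hu, (orbit_eq_of_mem hu).symm⟩

lemma palG_mono {w : List A} {x : A} : PalG G w ⊆ PalG G (w ++ [x]) := by
  rintro S ⟨v, hinf, hp, rfl⟩
  exact ⟨v, hinf.trans (List.prefix_append w [x]).isInfix, hp, rfl⟩

lemma gammaSet_mono {w : List A} {x : A} : gammaSet G w ⊆ gammaSet G (w ++ [x]) := by
  rintro S ⟨a, ha, hnp, rfl⟩
  exact ⟨a, List.mem_append_left _ ha, hnp, rfl⟩

lemma palG_finite (w : List A) : (PalG G w).Finite := by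
  have h : PalG G w ⊆ (orbitG G) '' {v | v ∈ w.sublists} := by
    rintro S ⟨v, hinf, hp, rfl⟩
    exact ⟨v, by simpa [List.mem_sublists] using hinf.sublist, rfl⟩
  exact ((w.sublists.finite_toSet).image _).subset h

lemma gammaSet_finite (w : List A) : (gammaSet G w).Finite := by
  have h : gammaSet G w ⊆ (orbitG G) '' {v | v ∈ w.sublists} := by
    rintro S ⟨a, ha, hnp, rfl⟩
    exact ⟨[a], by simpa [List.mem_sublists] using List.singleton_sublist.mpr ha, rfl⟩
  exact ((w.sublists.finite_toSet).image _).subset h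

lemma lacunaSet_subset (w : List A) : lacunaSet G w ⊆ Set.Iio w.length := by
  rintro i ⟨h, -⟩
  exact h

lemma lacunaSet_finite (w : List A) : (lacunaSet G w).Finite :=
  (Set.finite_Iio _).subset (lacunaSet_subset w)

lemma exists_glps (hanti : ∃ Θ ∈ G.carrier, IsAntimorphism Θ) (p : List A) :
    ∃ s : List A, IsGlps G p s := by
  classical
  set P : ℕ → Prop := fun n => ∃ s : List A, s <:+ p ∧ GPal G s ∧ s.length = n with hP
  have h0 : P 0 := ⟨[], List.nil_suffix, gpal_nil hanti, rfl⟩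
  have hspec : P (Nat.findGreatest P p.length) :=
    Nat.findGreatest_spec (Nat.zero_le _) h0
  obtain ⟨s, hs, hpal, hlen⟩ := hspec
  refine ⟨s, hs, hpal, ?_⟩
  intro t ht hpt
  rw [hlen]
  exact Nat.le_findGreatest ht.length_le ⟨t, ht, hpt, rfl⟩

lemma glps_unique {p s₁ s₂ : List A} (h1 : IsGlps G p s₁) (h2 : IsGlps G p s₂) : s₁ = s₂ := by
  have hl : s₁.length = s₂.length :=
    le_antisymm (h2.2.2 _ h1.1 h1.2.1) (h1.2.2 _ h2.1 h2.2.1)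
  exact suffix_eq_of_length h1.1 h2.1 hl

lemma palG_concat_sub {w lps : List A} {x : A} (hlps : IsGlps G (w ++ [x]) lps) :
    ∀ S ∈ PalG G (w ++ [x]), S ∈ PalG G w ∨ S = orbitG G lps := by
  rintro S ⟨v, hinf, hp, rfl⟩
  by_cases hold : ∃ u ∈ orbitG G v, u <:+: w
  · left; exact (mem_palG_iff hp).mpr hold
  · right
    push_neg at hold
    have hvw : ¬ v <:+: w := hold v (mem_orbit_self v)
    have hvsuf : v <:+ (w ++ [x]) := (infix_concat hinf).resolve_right hvw
    have hle : v.length ≤ lps.length := hlps.2.2 v hvsuf hp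
    rcases eq_or_lt_of_le hle with heq | hlt
    · exact congrArg _ (suffix_eq_of_length hvsuf hlps.1 heq)
    · exfalso
      have hvl : v <:+ lps := suffix_of_suffix_le hvsuf hlps.1 hle
      obtain ⟨Θ, hΘ, hΘa, hfix⟩ := hlps.2.1
      obtain ⟨u, rfl⟩ := hvl
      have h1 : Θ v ++ Θ u = u ++ v := by rw [← hΘa u v, hfix]
      obtain ⟨q, hq⟩ := hlps.1
      have h2 : w ++ [x] = q ++ Θ v ++ Θ u := by
        rw [← hq, ← h1]; simp
      have hΘune : Θ u ≠ [] := by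
        intro hnil
        have h4 := length_map hΘ u
        rw [hnil] at h4
        simp only [List.length_nil] at h4
        simp only [List.length_append] at hlt
        omega
      exact hold (Θ v) ⟨Θ, hΘ, rfl⟩ (infix_of_eq_concat h2 hΘune)

lemma palG_concat_old {w lps : List A} {x : A} (hlps : IsGlps G (w ++ [x]) lps)
    (hold : ∃ u ∈ orbitG G lps, u <:+: w) : PalG G (w ++ [x]) = PalG G w := by
  apply Set.Subset.antisymm _ palG_mono
  intro S hS
  rcases palG_concat_sub hlps S hS with h | rfl
  · exact h
  · exact (mem_palG_iff hlps.2.1).mpr hold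

lemma palG_concat_new {w lps : List A} {x : A} (hlps : IsGlps G (w ++ [x]) lps)
    (hnew : ∀ u ∈ orbitG G lps, ¬ u <:+: w) :
    PalG G (w ++ [x]) = insert (orbitG G lps) (PalG G w) ∧ orbitG G lps ∉ PalG G w := by
  have hnotmem : orbitG G lps ∉ PalG G w := by
    intro hmem
    obtain ⟨u, hu, hinf⟩ := (mem_palG_iff hlps.2.1).mp hmem
    exact hnew u hu hinf
  refine ⟨Set.Subset.antisymm ?_ ?_, hnotmem⟩
  · intro S hS
    rcases palG_concat_sub hlps S hS with h | rfl
    · exact Set.mem_insert_of_mem _ h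
    · exact Set.mem_insert _ _
  · intro S hS
    rcases Set.mem_insert_iff.mp hS with rfl | h
    · exact ⟨lps, hlps.1.isInfix, hlps.2.1, rfl⟩
    · exact palG_mono h

lemma not_gpal_iff {a : A} :
    (∀ Θ ∈ G.carrier, IsAntimorphism Θ → Θ [a] ≠ [a]) ↔ ¬ GPal G ([a] : List A) := by
  constructor
  · rintro h ⟨Θ, hΘ, hA, hfix⟩
    exact h Θ hΘ hA hfix
  · intro h Θ hΘ hA hfix
    exact h ⟨Θ, hΘ, hA, hfix⟩

lemma mem_singleton_infix {c : A} {w : List A} (h : c ∈ w) : [c] <:+: w := by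
  obtain ⟨p, s, rfl⟩ := List.append_of_mem h
  exact ⟨p, s, by simp⟩

lemma mem_gammaSet_iff {w : List A} (b : A) :
    orbitG G [b] ∈ gammaSet G w ↔ ¬ GPal G ([b] : List A) ∧ ∃ c, c ∈ w ∧ [c] ∈ orbitG G ([b] : List A) := by
  constructor
  · rintro ⟨a, ha, hcond, heq⟩
    have hmem : [a] ∈ orbitG G ([b] : List A) := by
      rw [heq]; exact mem_orbit_self [a]
    refine ⟨?_, a, ha, hmem⟩
    intro hpb
    exact (not_gpal_iff.mp hcond) (gpal_orbit hpb hmem)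
  · rintro ⟨hnp, c, hc, hmem⟩
    refine ⟨c, hc, ?_, (orbit_eq_of_mem hmem).symm⟩
    apply not_gpal_iff.mpr
    intro hpc
    have hbm : [b] ∈ orbitG G ([c] : List A) := by
      rw [orbit_eq_of_mem hmem]; exact mem_orbit_self [b]
    exact hnp (gpal_orbit hpc hbm)

lemma gammaSet_concat_old {w : List A} {x : A}
    (h : GPal G ([x] : List A) ∨ ∃ u ∈ orbitG G ([x] : List A), u <:+: w) :
    gammaSet G (w ++ [x]) = gammaSet G w := by
  apply Set.Subset.antisymm _ gammaSet_mono
  rintro S ⟨a, ha, hcond, rfl⟩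
  rcases List.mem_append.mp ha with haw | hax
  · exact ⟨a, haw, hcond, rfl⟩
  · have hax' : a = x := by simpa using hax
    subst hax'
    rcases h with hp | ⟨u, hu, hinf⟩
    · exact absurd hp (not_gpal_iff.mp hcond)
    · obtain ⟨μ, hμ, rfl⟩ := hu
      obtain ⟨c, hc⟩ := map_single hμ a
      rw [hc] at hinf
      have hcw : c ∈ w := hinf.subset (by simp)
      exact (mem_gammaSet_iff a).mpr ⟨not_gpal_iff.mp hcond, c, hcw, ⟨μ, hμ, hc.symm⟩⟩

lemma gammaSet_concat_new {w : List A} {x : A} (hnp : ¬ GPal G ([x] : List A))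
    (hnew : ∀ u ∈ orbitG G ([x] : List A), ¬ u <:+: w) :
    gammaSet G (w ++ [x]) = insert (orbitG G [x]) (gammaSet G w) ∧
      orbitG G [x] ∉ gammaSet G w := by
  have hnotmem : orbitG G [x] ∉ gammaSet G w := by
    intro hmem
    obtain ⟨-, c, hc, hcm⟩ := (mem_gammaSet_iff x).mp hmem
    exact hnew [c] hcm (mem_singleton_infix hc)
  refine ⟨Set.Subset.antisymm ?_ ?_, hnotmem⟩
  · rintro S ⟨a, ha, hcond, rfl⟩
    rcases List.mem_append.mp ha with haw | hax
    · exact Set.mem_insert_of_mem _ ⟨a, haw, hcond, rfl⟩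
    · have hax' : a = x := by simpa using hax
      subst hax'
      exact Set.mem_insert _ _
  · intro S hS
    rcases Set.mem_insert_iff.mp hS with rfl | h
    · exact ⟨x, by simp, not_gpal_iff.mpr hnp, rfl⟩
    · exact gammaSet_mono h

lemma comb1 {w lps : List A} {x : A} (hlps : IsGlps G (w ++ [x]) lps)
    (hU : ∀ u ∈ orbitG G ([x] : List A), ¬ u <:+: w) (hp : GPal G ([x] : List A)) :
    lps ≠ [] ∧ ∀ u ∈ orbitG G lps, ¬ u <:+: w := by
  have hxs : [x] <:+ (w ++ [x]) := List.suffix_append w [x]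
  have h1 : 1 ≤ lps.length := by
    have := hlps.2.2 [x] hxs hp
    simpa using this
  have hne : lps ≠ [] := by
    intro hnil; rw [hnil] at h1; simp at h1
  refine ⟨hne, ?_⟩
  rintro u ⟨μ, hμ, rfl⟩ hinf
  have hxl : [x] <:+ lps := suffix_of_suffix_le hxs hlps.1 (by simpa using h1)
  have hx : x ∈ lps := hxl.sublist.subset (by simp)
  obtain ⟨c, hcm, hco⟩ := mem_map_of_mem hμ hx
  have hcw : c ∈ w := hinf.subset hcm
  exact hU [c] hco (mem_singleton_infix hcw)

lemma comb2 {w lps : List A} {x : A} (hlps : IsGlps G (w ++ [x]) lps)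
    (hU : ∀ u ∈ orbitG G ([x] : List A), ¬ u <:+: w) (hnp : ¬ GPal G ([x] : List A)) :
    lps = [] := by
  by_contra hne
  have h1 : 1 ≤ lps.length := by
    cases lps with
    | nil => exact absurd rfl hne
    | cons _ _ => simp
  have hxs : [x] <:+ (w ++ [x]) := List.suffix_append w [x]
  have hxl : [x] <:+ lps := suffix_of_suffix_le hxs hlps.1 (by simpa using h1)
  obtain ⟨l', rfl⟩ := hxl
  obtain ⟨Θ, hΘ, hΘa, hfix⟩ := hlps.2.1
  obtain ⟨c, hc⟩ := map_single hΘ x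
  have h2 : [c] ++ Θ l' = l' ++ [x] := by
    rw [← hc, ← hΘa l' [x], hfix]
  cases l' with
  | nil =>
    rw [map_nil hΘ] at h2
    simp only [List.append_nil, List.nil_append] at h2
    apply hnp
    exact ⟨Θ, hΘ, hΘa, by rw [hc, h2]⟩
  | cons d t =>
    have hcd : c = d := by
      have := congrArg (fun l => l.head?) h2
      simpa using this
    subst hcd
    obtain ⟨q, hq⟩ := hlps.1
    have hqw : q ++ (c :: t) = w := by
      have h3 : (q ++ (c :: t)) ++ [x] = w ++ [x] := by
        rw [← hq]; simp
      exact (List.append_inj' h3 rfl).1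
    have hcw : c ∈ w := by
      rw [← hqw]; simp
    exact hU [c] ⟨Θ, hΘ, hc.symm⟩ (mem_singleton_infix hcw)

lemma lacuna_mem_lt {w : List A} {x : A} {i : ℕ} (hi : i < w.length) :
    (i ∈ lacunaSet G (w ++ [x]) ↔ i ∈ lacunaSet G w) := by
  have ht : (w ++ [x]).take (i + 1) = w.take (i + 1) :=
    List.take_append_of_le_length hi
  have hlt : i < (w ++ [x]).length := by
    simp only [List.length_append, List.length_singleton]; omega
  have hg : ∀ (h : i < (w ++ [x]).length), (w ++ [x]).get ⟨i, h⟩ = w.get ⟨i, hi⟩ := by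
    intro h
    simp only [List.get_eq_getElem]
    exact List.getElem_append_left hi
  simp only [lacunaSet, Set.mem_setOf_eq]
  constructor
  · rintro ⟨h, hc1, hc2⟩
    rw [hg h, ht] at hc1
    refine ⟨hi, hc1, ?_⟩
    intro t hts
    rw [← ht]
    exact hc2 t (by rwa [ht])
  · rintro ⟨h, hc1, hc2⟩
    refine ⟨hlt, ?_, ?_⟩
    · rwa [hg hlt, ht]
    · intro t hts
      rw [ht] at hts ⊢
      exact hc2 t hts

lemma lacuna_mem_last {w lps : List A} {x : A} (hlps : IsGlps G (w ++ [x]) lps) :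
    (w.length ∈ lacunaSet G (w ++ [x]) ↔
      ¬ GUnioccurrent G [x] (w ++ [x]) ∧ ¬ GUnioccurrent G lps (w ++ [x])) := by
  have hlt : w.length < (w ++ [x]).length := by
    simp only [List.length_append, List.length_singleton]; omega
  have ht : (w ++ [x]).take (w.length + 1) = w ++ [x] :=
    List.take_of_length_le (by simp)
  have hg : ∀ (h : w.length < (w ++ [x]).length), (w ++ [x]).get ⟨w.length, h⟩ = x := by
    intro h
    simp only [List.get_eq_getElem]
    exact List.getElem_concat_length (l := w) (a := x) rfl (by simpa using h)
  simp only [lacunaSet, Set.mem_setOf_eq]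
  constructor
  · rintro ⟨h, hc1, hc2⟩
    rw [hg h, ht] at hc1
    refine ⟨hc1, ?_⟩
    have := hc2 lps (by rwa [ht])
    rwa [ht] at this
  · rintro ⟨hc1, hc2⟩
    refine ⟨hlt, by rwa [hg hlt, ht], ?_⟩
    intro t hts
    rw [ht] at hts ⊢
    rwa [glps_unique hts hlps]

lemma not_mem_lacuna_self (w : List A) : w.length ∉ lacunaSet G w := by
  intro h
  have := lacunaSet_subset w h
  simp at this

lemma lacunaSet_concat_eq {w lps : List A} {x : A} (hlps : IsGlps G (w ++ [x]) lps)
    (h : GUnioccurrent G [x] (w ++ [x]) ∨ GUnioccurrent G lps (w ++ [x])) :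
    lacunaSet G (w ++ [x]) = lacunaSet G w := by
  ext i
  rcases lt_trichotomy i w.length with hi | rfl | hi
  · exact lacuna_mem_lt hi
  · constructor
    · intro hm
      obtain ⟨h1, h2⟩ := (lacuna_mem_last hlps).mp hm
      rcases h with h | h
      · exact absurd h h1
      · exact absurd h h2
    · intro hm
      have := lacunaSet_subset w hm
      simp at this
  · constructor
    · intro hm
      have := lacunaSet_subset _ hm
      simp only [Set.mem_Iio, List.length_append, List.length_singleton] at this
      omega
    · intro hm
      have := lacunaSet_subset _ hm
      simp only [Set.mem_Iio] at this
      omega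

lemma lacunaSet_concat_insert {w lps : List A} {x : A} (hlps : IsGlps G (w ++ [x]) lps)
    (h1 : ¬ GUnioccurrent G [x] (w ++ [x])) (h2 : ¬ GUnioccurrent G lps (w ++ [x])) :
    lacunaSet G (w ++ [x]) = insert w.length (lacunaSet G w) := by
  ext i
  rcases lt_trichotomy i w.length with hi | rfl | hi
  · rw [lacuna_mem_lt hi]
    simp only [Set.mem_insert_iff]
    constructor
    · exact Or.inr
    · rintro (rfl | h)
      · omega
      · exact h
  · constructor
    · intro _; exact Set.mem_insert _ _
    · intro _; exact (lacuna_mem_last hlps).mpr ⟨h1, h2⟩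
  · constructor
    · intro hm
      have := lacunaSet_subset _ hm
      simp only [Set.mem_Iio, List.length_append, List.length_singleton] at this
      omega
    · intro hm
      rcases Set.mem_insert_iff.mp hm with rfl | hm'
      · omega
      · have := lacunaSet_subset _ hm'
        simp only [Set.mem_Iio] at this
        omega

theorem key (hanti : ∃ Θ ∈ G.carrier, IsAntimorphism Θ) (w : List A) :
    (PalG G w).ncard + gammaG G w + (lacunaSet G w).ncard = w.length + 1 := by
  induction w using List.reverseRecOn with
  | nil =>
    have h1 : PalG G ([] : List A) = {orbitG G ([] : List A)} := by
      ext S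
      constructor
      · rintro ⟨v, hinf, hp, rfl⟩
        have hv : v = [] := by
          have := hinf.sublist
          simpa using this
        subst hv
        rfl
      · rintro rfl
        exact ⟨[], List.infix_refl [], gpal_nil hanti, rfl⟩
    have h2 : gammaSet G ([] : List A) = ∅ := by
      ext S
      simp [gammaSet]
    have h3 : lacunaSet G ([] : List A) = ∅ := by
      ext i
      simp only [lacunaSet, Set.mem_setOf_eq, List.length_nil]
      constructor
      · rintro ⟨h, -⟩; omega
      · intro h; exact absurd h (Set.notMem_empty i)
    rw [gammaG_eq, h1, h2, h3]
    simp
  | append_singleton w x ih =>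
    obtain ⟨lps, hlps⟩ := exists_glps hanti (w ++ [x])
    have hxs : [x] <:+ (w ++ [x]) := List.suffix_append w [x]
    have hlen : (w ++ [x]).length = w.length + 1 := by simp
    rw [gammaG_eq] at ih ⊢
    by_cases hUx : GUnioccurrent G [x] (w ++ [x])
    · have hUx' : ∀ u ∈ orbitG G ([x] : List A), ¬ u <:+: w :=
        (guniocc_iff hxs (by simp)).mp hUx
      have hlac : lacunaSet G (w ++ [x]) = lacunaSet G w :=
        lacunaSet_concat_eq hlps (Or.inl hUx)
      by_cases hpx : GPal G ([x] : List A)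
      · obtain ⟨hlne, hlnew⟩ := comb1 hlps hUx' hpx
        obtain ⟨hpal, hnm⟩ := palG_concat_new hlps hlnew
        have hγ := gammaSet_concat_old (G := G) (w := w) (x := x) (Or.inl hpx)
        rw [hpal, hγ, hlac, hlen, Set.ncard_insert_of_notMem hnm (palG_finite w)]
        omega
      · have hlnil : lps = [] := comb2 hlps hUx' hpx
        have hold : ∃ u ∈ orbitG G lps, u <:+: w := by
          subst hlnil
          exact ⟨[], mem_orbit_self [], List.nil_infix⟩
        have hpal := palG_concat_old hlps hold
        obtain ⟨hγ, hnm⟩ := gammaSet_concat_new hpx hUx'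
        rw [hpal, hγ, hlac, hlen, Set.ncard_insert_of_notMem hnm (gammaSet_finite w)]
        omega
    · have hUxold : ∃ u ∈ orbitG G ([x] : List A), u <:+: w := by
        by_contra hc
        push_neg at hc
        exact hUx ((guniocc_iff hxs (by simp)).mpr hc)
      have hγ := gammaSet_concat_old (G := G) (Or.inr hUxold)
      by_cases hUl : GUnioccurrent G lps (w ++ [x])
      · have hlne : lps ≠ [] := by
          rintro rfl
          exact not_guniocc_nil hUl
        have hlnew := (guniocc_iff hlps.1 hlne).mp hUl
        obtain ⟨hpal, hnm⟩ := palG_concat_new hlps hlnew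
        have hlac : lacunaSet G (w ++ [x]) = lacunaSet G w :=
          lacunaSet_concat_eq hlps (Or.inr hUl)
        rw [hpal, hγ, hlac, hlen, Set.ncard_insert_of_notMem hnm (palG_finite w)]
        omega
      · have hold : ∃ u ∈ orbitG G lps, u <:+: w := by
          by_cases hlne : lps = []
          · subst hlne
            exact ⟨[], mem_orbit_self [], List.nil_infix⟩
          · by_contra hc
            push_neg at hc
            exact hUl ((guniocc_iff hlps.1 hlne).mpr hc)
        have hpal := palG_concat_old hlps hold
        have hlac := lacunaSet_concat_insert hlps hUx hUl
        rw [hpal, hγ, hlac, hlen,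
          Set.ncard_insert_of_notMem (not_mem_lacuna_self w) (lacunaSet_finite w)]
        omega

end DefectProof

theorem DG_eq_number_of_lacunas {A : Type*} [Fintype A] (G : AMGroup A)
    (hanti : ∃ Θ ∈ G.carrier, IsAntimorphism Θ) (w : List A) :
    DG G w =
      {i : ℕ | ∃ h : i < w.length,
        ¬ GUnioccurrent G [w.get ⟨i, h⟩] (w.take (i + 1)) ∧
        ∀ s : List A, IsGlps G (w.take (i + 1)) s →
          ¬ GUnioccurrent G s (w.take (i + 1))}.ncard := by
  have hk := DefectProof.key hanti w
  have h1 : (PalG G w).ncard + gammaG G w ≤ w.length + 1 := by omega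
  show DG G w = (DefectProof.lacunaSet G w).ncard
  unfold DG
  omega
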